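/- (Remark 3.2(1): pseudo-hyperbolic Lipschitz characterization of ‖f‖_{2,gen} ≤ 1 on the disk.) Let f : 𝔻 → ℂ be a function on the open unit disk. Then the following are equivalent: (i) for every 2×2 complex matrix T with ‖T‖ ≤ 1 that is diagonalizable with two distinct eigenvalues z, w ∈ 𝔻 and corresponding eigenvectors v_1, v_2 forming a basis of ℂ^2, the matrix f(T) determined by f(T)v_1 = f(z)v_1 and f(T)v_2 = f(w)v_2 satisfies ‖f(T)‖ ≤ 1; (ii) |f(z)| ≤ 1 for all z ∈ 𝔻 and |f(z) − f(w)| ≤ d_𝔻(z,w) · |1 − conj(f(w))·f(z)| for all z, w ∈ 𝔻 (i.e., sup_{z≠w} d_𝔻(f(z),f(w))/d_𝔻(z,w) ≤ 1). -/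

import Mathlib

open scoped Matrix.Norms.L2Operator ComplexOrder
open Matrix

noncomputable section

open scoped Classical in
/-- Square root of a positive semidefinite matrix (junk value `0` otherwise). -/
def msqrt {n' : Type*} [Fintype n'] [DecidableEq n'] (M : Matrix n' n' ℂ) : Matrix n' n' ℂ :=
  if h : M.PosSemidef then (h.1.eigenvectorUnitary : Matrix n' n' ℂ) *
      diagonal (fun i => ((Real.sqrt (h.1.eigenvalues i) : ℝ) : ℂ)) *
      (star h.1.eigenvectorUnitary : Matrix n' n' ℂ) else 0

/-- The pseudo-distance `d_Δ`. -/
def dDelta {α m' n' : Type*} [Fintype m'] [Fintype n'] [DecidableEq m'] [DecidableEq n']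
    (Δ : α → Matrix m' n' ℂ) (z w : α) : ℝ :=
  ‖(msqrt (1 - Δ w * (Δ w)ᴴ))⁻¹ * ((Δ z - Δ w) *
      ((1 - (Δ w)ᴴ * Δ z)⁻¹ * msqrt (1 - (Δ w)ᴴ * Δ w)))‖

/-- `B_Δ = {z ∈ E : ‖Δ(z)‖ < 1}`. -/
def BDelta {α m' n' : Type*} [Fintype m'] [Fintype n'] [DecidableEq n'] (E : Set α)
    (Δ : α → Matrix m' n' ℂ) : Set α :=
  {z | z ∈ E ∧ ‖Δ z‖ < 1}

/-- pseudo-hyperbolic distance on the unit disk -/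
def dDisk (a b : ℂ) : ℝ := ‖a - b‖ / ‖1 - (starRingEnd ℂ) b * a‖

/-- elementary tensor `ξ ⊗ v` in `ℂ^m ⊗ ℂ^2`, realized as a function on `m × Fin 2` -/
def tpr {m' : Type*} (ξ : m' → ℂ) (v : Fin 2 → ℂ) : m' × Fin 2 → ℂ :=
  fun p => ξ p.1 * v p.2

/-- inner product, conjugate-linear in the second variable -/
def herm {m' : Type*} [Fintype m'] (ξ η : m' → ℂ) : ℂ :=
  ∑ p, ξ p * (starRingEnd ℂ) (η p)

/-- positive semidefiniteness of a `2 × 2` kernel `(a i j)` -/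
def PSD2 (a : Fin 2 → Fin 2 → ℂ) : Prop :=
  ∀ c : Fin 2 → ℂ, 0 ≤ ∑ i, ∑ j, a i j * c i * (starRingEnd ℂ) (c j)

/-- `T` is a generic tuple with joint eigenvectors `v` and joint eigenvalues `z 0 ≠ z 1`. -/
def IsGenericTuple {d : ℕ} (T : Fin d → Matrix (Fin 2) (Fin 2) ℂ)
    (v : Fin 2 → Fin 2 → ℂ) (z : Fin 2 → Fin d → ℂ) : Prop :=
  LinearIndependent ℂ v ∧ z 0 ≠ z 1 ∧ ∀ i j, T i *ᵥ v j = z j i • v j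

/-- `‖Δ(T)‖ ≤ 1`, where `Δ(T)` is the matrix on `ℂ^s ⊗ ℂ^2` determined by
`Δ(T)(e_i ⊗ v_j) = (Δ(z_j) e_i) ⊗ v_j`. -/
def DeltaTContract {β : Type*} {s r : ℕ} (Δ : β → Matrix (Fin s) (Fin r) ℂ)
    (v : Fin 2 → Fin 2 → ℂ) (z : Fin 2 → β) : Prop :=
  ∀ DT : Matrix (Fin s × Fin 2) (Fin r × Fin 2) ℂ,
    (∀ (i : Fin r) (j : Fin 2),
      DT *ᵥ tpr (Pi.single i 1) (v j) = tpr (Δ (z j) *ᵥ Pi.single i 1) (v j)) →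
    ‖DT‖ ≤ 1

/-- membership in the class `S_{2,gen}(B_Δ)` -/
def MemS2gen {d s r : ℕ} (E : Set (Fin d → ℂ)) (Δ : (Fin d → ℂ) → Matrix (Fin s) (Fin r) ℂ)
    (f : (Fin d → ℂ) → ℂ) : Prop :=
  ∀ (T : Fin d → Matrix (Fin 2) (Fin 2) ℂ) (v : Fin 2 → Fin 2 → ℂ) (z : Fin 2 → Fin d → ℂ),
    IsGenericTuple T v z → (∀ j, z j ∈ BDelta E Δ) → DeltaTContract Δ v z →
    ∀ fT : Matrix (Fin 2) (Fin 2) ℂ, (∀ j, fT *ᵥ v j = f (z j) • v j) → ‖fT‖ ≤ 1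

/-- the Möbius pseudo-distance of a domain `Ω` -/
def dMobius {α : Type*} [NormedAddCommGroup α] [NormedSpace ℂ α] (Ω : Set α) (z w : α) : ℝ :=
  sSup {x | ∃ g : α → ℂ, DifferentiableOn ℂ g Ω ∧ (∀ ζ ∈ Ω, ‖g ζ‖ < 1) ∧ x = dDisk (g z) (g w)}

/-- `Ω` is a complete spectral domain for the diagonalizable tuple with eigenvectors `v` and
joint eigenvalues `z 0, z 1`. -/
def IsCompleteSpectralDomainFor {α : Type*} [NormedAddCommGroup α] [NormedSpace ℂ α]
    (Ω : Set α) (v : Fin 2 → Fin 2 → ℂ) (z : Fin 2 → α) : Prop :=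
  ∀ (n : ℕ) (F : α → Matrix (Fin n) (Fin n) ℂ),
    (∀ i j, DifferentiableOn ℂ (fun ζ => F ζ i j) Ω) →
    ∀ C : ℝ, (∀ ζ ∈ Ω, ‖F ζ‖ ≤ C) →
    ∀ FT : Matrix (Fin n × Fin 2) (Fin n × Fin 2) ℂ,
      (∀ (ξ : Fin n → ℂ) (j : Fin 2), FT *ᵥ tpr ξ (v j) = tpr (F (z j) *ᵥ ξ) (v j)) →
      ‖FT‖ ≤ C




lemma contract_iff (A : Matrix (Fin 2) (Fin 2) ℂ) :
    ‖A‖ ≤ 1 ↔ ∀ x : Fin 2 → ℂ,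
      ∑ i, Complex.normSq ((A *ᵥ x) i) ≤ ∑ i, Complex.normSq (x i) := by
  have hnorm : ∀ y : Fin 2 → ℂ,
      ‖(WithLp.equiv 2 (Fin 2 → ℂ)).symm y‖ = Real.sqrt (∑ i, Complex.normSq (y i)) := by
    intro y
    rw [EuclideanSpace.norm_eq]
    congr 1
    refine Finset.sum_congr rfl fun i _ => ?_
    simp [Complex.sq_norm]
  constructor
  · intro h x
    have h2 := Matrix.l2_opNorm_mulVec A ((WithLp.equiv 2 (Fin 2 → ℂ)).symm x)
    have hx : (A *ᵥ ((WithLp.equiv 2 (Fin 2 → ℂ)).symm x : Fin 2 → ℂ)) = A *ᵥ x := rfl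
    rw [hx] at h2
    rw [show ((EuclideanSpace.equiv (Fin 2) ℂ).symm (A *ᵥ x) : EuclideanSpace ℂ (Fin 2)) =
      (WithLp.equiv 2 (Fin 2 → ℂ)).symm (A *ᵥ x) from rfl, hnorm, hnorm] at h2
    have h3 : Real.sqrt (∑ i, Complex.normSq ((A *ᵥ x) i)) ≤
        Real.sqrt (∑ i, Complex.normSq (x i)) := by
      calc Real.sqrt (∑ i, Complex.normSq ((A *ᵥ x) i)) ≤
          ‖A‖ * Real.sqrt (∑ i, Complex.normSq (x i)) := h2
        _ ≤ 1 * Real.sqrt (∑ i, Complex.normSq (x i)) := by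
            apply mul_le_mul_of_nonneg_right h (Real.sqrt_nonneg _)
        _ = _ := one_mul _
    exact (Real.sqrt_le_sqrt_iff (Finset.sum_nonneg fun i _ => Complex.normSq_nonneg _)).mp h3
  · intro h
    rw [Matrix.l2_opNorm_def]
    refine ContinuousLinearMap.opNorm_le_bound _ zero_le_one fun x => ?_
    rw [one_mul]
    have hx : x = (WithLp.equiv 2 (Fin 2 → ℂ)).symm ((WithLp.equiv 2 (Fin 2 → ℂ)) x) := by simp
    rw [hx] at *
    set y := (WithLp.equiv 2 (Fin 2 → ℂ)) x with hy
    have happ : ((Matrix.toEuclideanLin.trans LinearMap.toContinuousLinearMap) A)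
          ((WithLp.equiv 2 (Fin 2 → ℂ)).symm y) = (WithLp.equiv 2 (Fin 2 → ℂ)).symm (A *ᵥ y) := rfl
    rw [happ, hnorm, hnorm]
    exact Real.sqrt_le_sqrt (h y)

lemma sum_normSq_comb (v : Fin 2 → Fin 2 → ℂ) (a b : ℂ) :
    ∑ i : Fin 2, Complex.normSq (a * v 0 i + b * v 1 i)
      = Complex.normSq a * (herm (v 0) (v 0)).re + Complex.normSq b * (herm (v 1) (v 1)).re
        + 2 * (a * (starRingEnd ℂ) b * herm (v 0) (v 1)).re := by
  simp only [herm, Fin.sum_univ_two, Complex.normSq_apply, Complex.add_re, Complex.add_im,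
    Complex.mul_re, Complex.mul_im, Complex.conj_re, Complex.conj_im]
  ring

lemma exists_comb (v : Fin 2 → Fin 2 → ℂ) (hv : LinearIndependent ℂ v) (x : Fin 2 → ℂ) :
    ∃ a b : ℂ, x = fun i => a * v 0 i + b * v 1 i := by
  have hcard : Fintype.card (Fin 2) = Module.finrank ℂ (Fin 2 → ℂ) := by
    simp
  let B := basisOfLinearIndependentOfCardEqFinrank hv hcard
  have hB : ∀ i, B i = v i := fun i => by
    simp [B, coe_basisOfLinearIndependentOfCardEqFinrank]
  refine ⟨B.repr x 0, B.repr x 1, ?_⟩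
  have := B.sum_repr x
  rw [Fin.sum_univ_two, hB, hB] at this
  funext i
  have h2 := congrFun this i
  simp only [Pi.add_apply, Pi.smul_apply, smul_eq_mul] at h2
  exact h2.symm

lemma quad_nonneg_iff (α β : ℝ) (γ : ℂ) :
    (∀ a b : ℂ, 0 ≤ α * Complex.normSq a + β * Complex.normSq b
        + 2 * (a * (starRingEnd ℂ) b * γ).re)
      ↔ 0 ≤ α ∧ 0 ≤ β ∧ Complex.normSq γ ≤ α * β := by
  constructor
  · intro h
    have hα : 0 ≤ α := by have := h 1 0; simpa using this
    have hβ : 0 ≤ β := by have := h 0 1; simpa using this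
    refine ⟨hα, hβ, ?_⟩
    by_cases hγ : γ = 0
    · simp [hγ, mul_nonneg hα hβ]
    have hnγ : 0 < Complex.normSq γ := Complex.normSq_pos.mpr hγ
    have key : ∀ t : ℝ, 0 ≤ (α * Complex.normSq γ) * (t * t)
        + (2 * Complex.normSq γ) * t + β := by
      intro t
      have h0 := h ((t : ℂ) * (starRingEnd ℂ) γ) 1
      have hre : (((t : ℂ) * (starRingEnd ℂ) γ) * (starRingEnd ℂ) 1 * γ).re
          = t * Complex.normSq γ := by
        simp [Complex.normSq_apply, Complex.mul_re, Complex.mul_im, Complex.conj_re,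
          Complex.conj_im, Complex.ofReal_re, Complex.ofReal_im]
        ring
      have hns : Complex.normSq ((t : ℂ) * (starRingEnd ℂ) γ)
          = t * t * Complex.normSq γ := by
        simp [Complex.normSq_mul, Complex.normSq_conj, Complex.normSq_ofReal]
      rw [hre, hns, Complex.normSq_one] at h0
      nlinarith [h0]
    have hd := discrim_le_zero key
    rw [discrim] at hd
    nlinarith [hd, hnγ]
  · rintro ⟨hα, hβ, hγ⟩ a b
    have hre : -(‖a‖ * ‖b‖ * ‖γ‖) ≤ (a * (starRingEnd ℂ) b * γ).re := by
      have h1 : |(a * (starRingEnd ℂ) b * γ).re| ≤ ‖a * (starRingEnd ℂ) b * γ‖ :=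
        Complex.abs_re_le_norm _
      have h2 : ‖a * (starRingEnd ℂ) b * γ‖ = ‖a‖ * ‖b‖ * ‖γ‖ := by
        simp [norm_mul]
      rw [h2] at h1
      linarith [neg_abs_le ((a * (starRingEnd ℂ) b * γ).re)]
    have hg : ‖γ‖ ≤ Real.sqrt (α * β) := by
      rw [Complex.norm_def]
      exact Real.sqrt_le_sqrt hγ
    have hamg : 2 * (Real.sqrt α * ‖a‖) * (Real.sqrt β * ‖b‖)
        ≤ (Real.sqrt α * ‖a‖) ^ 2 + (Real.sqrt β * ‖b‖) ^ 2 := two_mul_le_add_sq _ _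
    have hsq : Real.sqrt α * Real.sqrt β = Real.sqrt (α * β) := (Real.sqrt_mul hα β).symm
    have hα' : Real.sqrt α ^ 2 = α := Real.sq_sqrt hα
    have hβ' : Real.sqrt β ^ 2 = β := Real.sq_sqrt hβ
    have hna : Complex.normSq a = ‖a‖ ^ 2 := by
      rw [Complex.normSq_eq_norm_sq]
    have hnb : Complex.normSq b = ‖b‖ ^ 2 := by
      rw [Complex.normSq_eq_norm_sq]
    nlinarith [hre, hamg, norm_nonneg a, norm_nonneg b, norm_nonneg γ,
      Real.sqrt_nonneg α, Real.sqrt_nonneg β,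
      mul_le_mul_of_nonneg_left hg (mul_nonneg (norm_nonneg a) (norm_nonneg b)),
      mul_nonneg (norm_nonneg a) (norm_nonneg b)]

lemma matrix_contract_iff (A : Matrix (Fin 2) (Fin 2) ℂ) (v : Fin 2 → Fin 2 → ℂ)
    (hv : LinearIndependent ℂ v) (μ ν : ℂ)
    (h0 : A *ᵥ v 0 = μ • v 0) (h1 : A *ᵥ v 1 = ν • v 1) :
    ‖A‖ ≤ 1 ↔
      (0 ≤ (1 - Complex.normSq μ) * (herm (v 0) (v 0)).re ∧
       0 ≤ (1 - Complex.normSq ν) * (herm (v 1) (v 1)).re ∧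
       Complex.normSq ((1 - μ * (starRingEnd ℂ) ν) * herm (v 0) (v 1)) ≤
         ((1 - Complex.normSq μ) * (herm (v 0) (v 0)).re) *
           ((1 - Complex.normSq ν) * (herm (v 1) (v 1)).re)) := by
  set g00 := (herm (v 0) (v 0)).re
  set g11 := (herm (v 1) (v 1)).re
  set g01 := herm (v 0) (v 1)
  set α := (1 - Complex.normSq μ) * g00
  set β := (1 - Complex.normSq ν) * g11
  set γ := (1 - μ * (starRingEnd ℂ) ν) * g01
  have hAx : ∀ a b : ℂ, (A *ᵥ fun i => a * v 0 i + b * v 1 i)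
      = fun i => (a * μ) * v 0 i + (b * ν) * v 1 i := by
    intro a b
    have hx : (fun i => a * v 0 i + b * v 1 i) = a • v 0 + b • v 1 := by
      funext i; simp [smul_eq_mul]
    rw [hx, Matrix.mulVec_add, Matrix.mulVec_smul, Matrix.mulVec_smul, h0, h1]
    funext i
    simp only [Pi.add_apply, Pi.smul_apply, smul_eq_mul]
    ring
  have hiden : ∀ a b : ℂ,
      (∑ i, Complex.normSq (a * v 0 i + b * v 1 i))
        - (∑ i, Complex.normSq ((a * μ) * v 0 i + (b * ν) * v 1 i))
      = α * Complex.normSq a + β * Complex.normSq b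
          + 2 * (a * (starRingEnd ℂ) b * γ).re := by
    intro a b
    have hcross : (a * (starRingEnd ℂ) b * γ).re
        = (a * (starRingEnd ℂ) b * g01).re
          - ((a * μ) * (starRingEnd ℂ) (b * ν) * g01).re := by
      rw [← Complex.sub_re]
      congr 1
      rw [RingHom.map_mul]
      simp only [γ]
      ring
    rw [sum_normSq_comb, sum_normSq_comb, hcross, Complex.normSq_mul, Complex.normSq_mul]
    simp only [α, β]
    ring
  rw [contract_iff, ← quad_nonneg_iff α β γ]
  constructor
  · intro h a b
    have h2 := h (fun i => a * v 0 i + b * v 1 i)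
    rw [hAx] at h2
    linarith [hiden a b]
  · intro h x
    obtain ⟨a, b, rfl⟩ := exists_comb v hv x
    have h2 := h a b
    rw [hAx]
    linarith [hiden a b]

section Helpers

open Complex

lemma normSq_eq_norm_sq' (x : ℂ) : Complex.normSq x = ‖x‖ ^ 2 := by
  rw [Complex.normSq_eq_norm_sq]

lemma herm_self_re_nonneg (ξ : Fin 2 → ℂ) : 0 ≤ (herm ξ ξ).re := by
  have : herm ξ ξ = ((∑ p, Complex.normSq (ξ p) : ℝ) : ℂ) := by
    simp [herm, Complex.mul_conj]
  rw [this]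
  simp only [Complex.ofReal_re]
  exact Finset.sum_nonneg fun p _ => Complex.normSq_nonneg _

lemma mob_ident (a b : ℂ) :
    Complex.normSq (1 - (starRingEnd ℂ) b * a) - Complex.normSq (a - b)
      = (1 - Complex.normSq a) * (1 - Complex.normSq b) := by
  simp only [Complex.normSq_apply, Complex.sub_re, Complex.sub_im, Complex.mul_re,
    Complex.mul_im, Complex.one_re, Complex.one_im, Complex.conj_re, Complex.conj_im]
  ring

lemma den_ne (a b : ℂ) (ha : ‖a‖ < 1) (hb : ‖b‖ < 1) :
    1 - (starRingEnd ℂ) b * a ≠ 0 := by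
  intro h
  have h1 : (1 : ℂ) = (starRingEnd ℂ) b * a := by linear_combination h
  have h2 : (1 : ℝ) = ‖b‖ * ‖a‖ := by
    calc (1 : ℝ) = ‖(1 : ℂ)‖ := by simp
      _ = ‖(starRingEnd ℂ) b * a‖ := by rw [h1]
      _ = ‖b‖ * ‖a‖ := by rw [norm_mul]; simp
  nlinarith [norm_nonneg a, norm_nonneg b]

lemma den_pos (a b : ℂ) (ha : ‖a‖ < 1) (hb : ‖b‖ < 1) :
    0 < Complex.normSq (1 - (starRingEnd ℂ) b * a) :=
  Complex.normSq_pos.mpr (den_ne a b ha hb)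

lemma den_norm_pos (a b : ℂ) (ha : ‖a‖ < 1) (hb : ‖b‖ < 1) :
    0 < ‖1 - (starRingEnd ℂ) b * a‖ :=
  norm_pos_iff.mpr (den_ne a b ha hb)

lemma nsq_lt_one (a : ℂ) (ha : ‖a‖ < 1) : Complex.normSq a < 1 := by
  rw [normSq_eq_norm_sq']
  nlinarith [norm_nonneg a]

lemma nsq_le_one (a : ℂ) (ha : ‖a‖ ≤ 1) : Complex.normSq a ≤ 1 := by
  rw [normSq_eq_norm_sq']
  nlinarith [norm_nonneg a]

end Helpers

set_option maxHeartbeats 1000000 in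
/-- **Remark 3.2(1)**: pseudo-hyperbolic Lipschitz characterization of `‖f‖_{2,gen} ≤ 1` on the
unit disk. -/
theorem memS2gen_disk_iff_lipschitz (f : ℂ → ℂ) :
    (∀ (T : Matrix (Fin 2) (Fin 2) ℂ) (v : Fin 2 → Fin 2 → ℂ) (z w : ℂ),
        ‖T‖ ≤ 1 → LinearIndependent ℂ v → z ≠ w → ‖z‖ < 1 → ‖w‖ < 1 →
        T *ᵥ v 0 = z • v 0 → T *ᵥ v 1 = w • v 1 →
        ∀ fT : Matrix (Fin 2) (Fin 2) ℂ,
          fT *ᵥ v 0 = f z • v 0 → fT *ᵥ v 1 = f w • v 1 → ‖fT‖ ≤ 1) ↔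
      ((∀ z : ℂ, ‖z‖ < 1 → ‖f z‖ ≤ 1) ∧
        ∀ z w : ℂ, ‖z‖ < 1 → ‖w‖ < 1 →
          ‖f z - f w‖ ≤ dDisk z w * ‖1 - (starRingEnd ℂ) (f w) * f z‖) := by
  constructor
  · intro h
    have hbound : ∀ z : ℂ, ‖z‖ < 1 → ‖f z‖ ≤ 1 := by
      intro z hz
      set w : ℂ := if z = 0 then (1/2 : ℂ) else z/2 with hwdef
      have hw : ‖w‖ < 1 := by
        rw [hwdef]; split
        · norm_num
        · rw [norm_div]
          have h2 : ‖(2:ℂ)‖ = 2 := by norm_num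
          rw [h2]; linarith
      have hzw : z ≠ w := by
        rw [hwdef]; split
        · rename_i h'; rw [h']; norm_num
        · rename_i h'; intro hc
          exact h' (by linear_combination 2*hc)
      set v : Fin 2 → Fin 2 → ℂ := ![![1,0],![0,1]] with hvdef
      have hv : LinearIndependent ℂ v := by
        rw [linearIndependent_fin2]
        constructor
        · intro hc
          have := congrFun hc 1
          simp [hvdef] at this
        · intro a hc
          have := congrFun hc 0
          simp [hvdef] at this
      have hg00 : herm (v 0) (v 0) = 1 := by
        simp [herm, hvdef, Fin.sum_univ_two]
      have hg11 : herm (v 1) (v 1) = 1 := by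
        simp [herm, hvdef, Fin.sum_univ_two]
      have hg01 : herm (v 0) (v 1) = 0 := by
        simp [herm, hvdef, Fin.sum_univ_two]
      set T : Matrix (Fin 2) (Fin 2) ℂ := !![z, 0; 0, w] with hTdef
      have hT0 : T *ᵥ v 0 = z • v 0 := by
        funext i; fin_cases i <;>
          simp [hTdef, hvdef, Matrix.mulVec, dotProduct, Fin.sum_univ_two]
      have hT1 : T *ᵥ v 1 = w • v 1 := by
        funext i; fin_cases i <;>
          simp [hTdef, hvdef, Matrix.mulVec, dotProduct, Fin.sum_univ_two]
      have hnz := nsq_lt_one z hz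
      have hnw := nsq_lt_one w hw
      have hT : ‖T‖ ≤ 1 := by
        rw [matrix_contract_iff T v hv z w hT0 hT1, hg00, hg11, hg01]
        refine ⟨?_, ?_, ?_⟩
        · simp only [Complex.one_re, mul_one]; linarith
        · simp only [Complex.one_re, mul_one]; linarith
        · simp only [mul_zero, map_zero, Complex.one_re, mul_one]
          nlinarith
      set fT : Matrix (Fin 2) (Fin 2) ℂ := !![f z, 0; 0, f w] with hfTdef
      have hf0 : fT *ᵥ v 0 = f z • v 0 := by
        funext i; fin_cases i <;>
          simp [hfTdef, hvdef, Matrix.mulVec, dotProduct, Fin.sum_univ_two]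
      have hf1 : fT *ᵥ v 1 = f w • v 1 := by
        funext i; fin_cases i <;>
          simp [hfTdef, hvdef, Matrix.mulVec, dotProduct, Fin.sum_univ_two]
      have hfT := h T v z w hT hv hzw hz hw hT0 hT1 fT hf0 hf1
      rw [matrix_contract_iff fT v hv (f z) (f w) hf0 hf1, hg00, hg11, hg01] at hfT
      obtain ⟨h1, -, -⟩ := hfT
      simp only [Complex.one_re, mul_one] at h1
      rw [normSq_eq_norm_sq'] at h1
      nlinarith [norm_nonneg (f z)]
    refine ⟨hbound, ?_⟩
    intro z w hz hw
    by_cases hzw : z = w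
    · subst hzw
      simp [dDisk]
    · -- the genuinely two-point case
      have hD : 0 < Complex.normSq (z - w) := Complex.normSq_pos.mpr (sub_ne_zero.mpr hzw)
      have hP : 0 < Complex.normSq (1 - (starRingEnd ℂ) w * z) := den_pos z w hz hw
      set D := Complex.normSq (z - w) with hDdef
      set P := Complex.normSq (1 - (starRingEnd ℂ) w * z) with hPdef
      set p := (1 - Complex.normSq z) * (1 - Complex.normSq w) with hpdef
      have hpP : p = P - D := by rw [hpdef, hPdef, hDdef, ← mob_ident z w]
      have hp0 : 0 ≤ p := by
        have := nsq_lt_one z hz; have := nsq_lt_one w hw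
        rw [hpdef]; nlinarith
      have hplt : p / P < 1 := (div_lt_one hP).mpr (by linarith)
      have hpP0 : 0 ≤ p / P := div_nonneg hp0 (le_of_lt hP)
      set c := Real.sqrt (p / P) with hcdef
      set s := Real.sqrt (1 - p / P) with hsdef
      have hc2 : c ^ 2 = p / P := Real.sq_sqrt hpP0
      have hs2 : s ^ 2 = 1 - p / P := Real.sq_sqrt (by linarith)
      have hs0 : 0 < s := Real.sqrt_pos.mpr (by linarith)
      have hsC : (s : ℂ) ≠ 0 := by
        simpa using ne_of_gt hs0
      set v : Fin 2 → Fin 2 → ℂ := ![![1, 0], ![(c : ℂ), (s : ℂ)]] with hvdef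
      have hv : LinearIndependent ℂ v := by
        rw [linearIndependent_fin2]
        constructor
        · intro hc'
          have h1 := congrFun hc' 1
          simp [hvdef] at h1
          exact hsC (by exact_mod_cast h1)
        · intro a hc'
          have h1 := congrFun hc' 1
          have h0 := congrFun hc' 0
          simp [hvdef] at h1 h0
          rcases h1 with h1 | h1
          · rw [h1] at h0; simp at h0
          · exact (ne_of_gt hs0) h1
      set T : Matrix (Fin 2) (Fin 2) ℂ := !![z, (c:ℂ) * (w - z) / (s:ℂ); 0, w] with hTdef
      have hT0 : T *ᵥ v 0 = z • v 0 := by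
        funext i; fin_cases i <;>
          simp [hTdef, hvdef, Matrix.mulVec, dotProduct, Fin.sum_univ_two]
      have hT1 : T *ᵥ v 1 = w • v 1 := by
        funext i; fin_cases i
        · simp [hTdef, hvdef, Matrix.mulVec, dotProduct, Fin.sum_univ_two]
          try field_simp
          try ring
        · simp [hTdef, hvdef, Matrix.mulVec, dotProduct, Fin.sum_univ_two]
          try ring
      set fT : Matrix (Fin 2) (Fin 2) ℂ := !![f z, (c:ℂ) * (f w - f z) / (s:ℂ); 0, f w]
        with hfTdef
      have hf0 : fT *ᵥ v 0 = f z • v 0 := by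
        funext i; fin_cases i <;>
          simp [hfTdef, hvdef, Matrix.mulVec, dotProduct, Fin.sum_univ_two]
      have hf1 : fT *ᵥ v 1 = f w • v 1 := by
        funext i; fin_cases i
        · simp [hfTdef, hvdef, Matrix.mulVec, dotProduct, Fin.sum_univ_two]
          try field_simp
          try ring
        · simp [hfTdef, hvdef, Matrix.mulVec, dotProduct, Fin.sum_univ_two]
          try ring
      have hg00 : herm (v 0) (v 0) = 1 := by
        simp [herm, hvdef, Fin.sum_univ_two]
      have hg11 : (herm (v 1) (v 1)).re = 1 := by
        have : herm (v 1) (v 1) = ((c:ℂ) * (c:ℂ) + (s:ℂ) * (s:ℂ)) := by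
          simp [herm, hvdef, Fin.sum_univ_two, Complex.conj_ofReal]
        rw [this]
        have : ((c:ℂ) * (c:ℂ) + (s:ℂ) * (s:ℂ)) = ((c * c + s * s : ℝ) : ℂ) := by
          push_cast; ring
        rw [this, Complex.ofReal_re]
        nlinarith [hc2, hs2]
      have hg01 : herm (v 0) (v 1) = (c : ℂ) := by
        simp [herm, hvdef, Fin.sum_univ_two, Complex.conj_ofReal]
      have hnz := nsq_lt_one z hz
      have hnw := nsq_lt_one w hw
      have hnsc : Complex.normSq ((c:ℂ)) = c ^ 2 := by
        rw [Complex.normSq_ofReal]; ring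
      have hswap : (1 - z * (starRingEnd ℂ) w) = (1 - (starRingEnd ℂ) w * z) := by ring
      have hT : ‖T‖ ≤ 1 := by
        rw [matrix_contract_iff T v hv z w hT0 hT1, hg00, hg01]
        refine ⟨?_, ?_, ?_⟩
        · simp only [Complex.one_re, mul_one]; linarith
        · linarith [mul_nonneg (show (0:ℝ) ≤ 1 - Complex.normSq w by linarith)
            (herm_self_re_nonneg (v 1))]
        · rw [Complex.normSq_mul, hswap, hnsc, hc2, hg11]
          simp only [Complex.one_re, mul_one]
          rw [← hPdef]
          have : P * (p / P) = p := by field_simp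
          rw [this, hpdef]
          try nlinarith
      have hfT := h T v z w hT hv hzw hz hw hT0 hT1 fT hf0 hf1
      rw [matrix_contract_iff fT v hv (f z) (f w) hf0 hf1, hg00, hg01, hg11] at hfT
      obtain ⟨-, -, h3⟩ := hfT
      rw [Complex.normSq_mul, hnsc, hc2] at h3
      simp only [Complex.one_re, mul_one] at h3
      set Q := Complex.normSq (1 - (starRingEnd ℂ) (f w) * f z) with hQdef
      set Df := Complex.normSq (f z - f w) with hDfdef
      have hfswap : Complex.normSq (1 - f z * (starRingEnd ℂ) (f w)) = Q := by
        rw [hQdef]; congr 1; ring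
      rw [hfswap] at h3
      have hqid : (1 - Complex.normSq (f z)) * (1 - Complex.normSq (f w)) = Q - Df :=
        (mob_ident (f z) (f w)).symm
      rw [hqid] at h3
      -- h3 : Q * (p / P) ≤ Q - Df
      have hmul : Q * p ≤ (Q - Df) * P := by
        have := mul_le_mul_of_nonneg_right h3 (le_of_lt hP)
        calc Q * p = Q * (p / P) * P := by field_simp
          _ ≤ (Q - Df) * P := this
      have hfin : Df * P ≤ D * Q := by
        rw [hpP] at hmul; nlinarith
      -- conclude
      have hden : 0 < ‖1 - (starRingEnd ℂ) w * z‖ := den_norm_pos z w hz hw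
      have hnormineq : ‖f z - f w‖ * ‖1 - (starRingEnd ℂ) w * z‖
          ≤ ‖z - w‖ * ‖1 - (starRingEnd ℂ) (f w) * f z‖ := by
        have hL : (‖f z - f w‖ * ‖1 - (starRingEnd ℂ) w * z‖) ^ 2 = Df * P := by
          rw [hDfdef, hPdef, normSq_eq_norm_sq', normSq_eq_norm_sq']; ring
        have hR : (‖z - w‖ * ‖1 - (starRingEnd ℂ) (f w) * f z‖) ^ 2 = D * Q := by
          rw [hDdef, hQdef, normSq_eq_norm_sq', normSq_eq_norm_sq']; ring
        have hfin2 : (‖f z - f w‖ * ‖1 - (starRingEnd ℂ) w * z‖) ^ 2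
            ≤ (‖z - w‖ * ‖1 - (starRingEnd ℂ) (f w) * f z‖) ^ 2 := by
          rw [hL, hR]; exact hfin
        have hs := Real.sqrt_le_sqrt hfin2
        rwa [Real.sqrt_sq (by positivity), Real.sqrt_sq (by positivity)] at hs
      rw [dDisk, div_mul_eq_mul_div, le_div_iff₀ hden]
      exact hnormineq
  · rintro ⟨hb, hlip⟩ T v z w hT hv hzw hz hw hT0 hT1 fT hf0 hf1
    rw [matrix_contract_iff fT v hv (f z) (f w) hf0 hf1]
    rw [matrix_contract_iff T v hv z w hT0 hT1] at hT
    obtain ⟨hA, hB, hC⟩ := hT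
    have hg00 : 0 ≤ (herm (v 0) (v 0)).re := herm_self_re_nonneg _
    have hg11 : 0 ≤ (herm (v 1) (v 1)).re := herm_self_re_nonneg _
    have hfz := nsq_le_one (f z) (hb z hz)
    have hfw := nsq_le_one (f w) (hb w hw)
    refine ⟨mul_nonneg (by linarith) hg00, mul_nonneg (by linarith) hg11, ?_⟩
    set g00 := (herm (v 0) (v 0)).re
    set g11 := (herm (v 1) (v 1)).re
    set t := Complex.normSq (herm (v 0) (v 1)) with htdef
    set D := Complex.normSq (z - w) with hDdef
    set P := Complex.normSq (1 - (starRingEnd ℂ) w * z) with hPdef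
    set Q := Complex.normSq (1 - (starRingEnd ℂ) (f w) * f z) with hQdef
    set Df := Complex.normSq (f z - f w) with hDfdef
    have hswap : (1 - z * (starRingEnd ℂ) w) = (1 - (starRingEnd ℂ) w * z) := by ring
    rw [Complex.normSq_mul, hswap, ← hPdef, ← htdef] at hC
    rw [show (1 - f z * (starRingEnd ℂ) (f w)) = (1 - (starRingEnd ℂ) (f w) * f z) from by ring,
      Complex.normSq_mul, ← hQdef, ← htdef]
    -- squared Lipschitz bound
    have hden : 0 < ‖1 - (starRingEnd ℂ) w * z‖ := den_norm_pos z w hz hw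
    have hlip' := hlip z w hz hw
    rw [dDisk, div_mul_eq_mul_div, le_div_iff₀ hden] at hlip'
    have hfin : Df * P ≤ D * Q := by
      have hL : (‖f z - f w‖ * ‖1 - (starRingEnd ℂ) w * z‖) ^ 2 = Df * P := by
        rw [hDfdef, hPdef, normSq_eq_norm_sq', normSq_eq_norm_sq']; ring
      have hR : (‖z - w‖ * ‖1 - (starRingEnd ℂ) (f w) * f z‖) ^ 2 = D * Q := by
        rw [hDdef, hQdef, normSq_eq_norm_sq', normSq_eq_norm_sq']; ring
      rw [← hL, ← hR]
      have h0 : 0 ≤ ‖f z - f w‖ * ‖1 - (starRingEnd ℂ) w * z‖ := by positivity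
      nlinarith [hlip', h0]
    have hpid : (1 - Complex.normSq z) * (1 - Complex.normSq w) = P - D :=
      (mob_ident z w).symm
    have hqid : (1 - Complex.normSq (f z)) * (1 - Complex.normSq (f w)) = Q - Df :=
      (mob_ident (f z) (f w)).symm
    set G := g00 * g11 with hGdef
    have hG : 0 ≤ G := mul_nonneg hg00 hg11
    have hCt : P * t ≤ (P - D) * G := by
      calc P * t ≤ ((1 - Complex.normSq z) * g00) * ((1 - Complex.normSq w) * g11) := hC
        _ = ((1 - Complex.normSq z) * (1 - Complex.normSq w)) * G := by rw [hGdef]; ring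
        _ = (P - D) * G := by rw [hpid]
    have hRHS : ((1 - Complex.normSq (f z)) * g00) * ((1 - Complex.normSq (f w)) * g11)
        = (Q - Df) * G := by
      rw [← hqid, hGdef]; ring
    rw [hRHS]
    have hQ0 : 0 ≤ Q := Complex.normSq_nonneg _
    have hP0 : 0 < P := den_pos z w hz hw
    have hkey : P * (Q * t + Df * G) ≤ P * (Q * G) := by
      nlinarith [mul_le_mul_of_nonneg_left hCt hQ0, mul_le_mul_of_nonneg_right hfin hG]
    have h5 : Q * t + Df * G ≤ Q * G := le_of_mul_le_mul_left hkey hP0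
    have hDf0 : 0 ≤ Df := Complex.normSq_nonneg _
    nlinarith [h5]
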